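/- Let b ≥ 2, K ≥ 1, and 1 ≤ k ≤ K. Set N = (bK)! + 1. Then k · b^N + 1 is composite (i.e., not prime and greater than 1). -/

import Mathlib

/-- For `b ≥ 2`, `1 ≤ k ≤ K` and `N = (bK)! + 1`, the number `k * b^N + 1` is
composite, i.e. greater than `1` and not prime. -/
theorem composite_key (b K k : ℕ) (hb : 2 ≤ b) (hK : 1 ≤ K) (hk : 1 ≤ k) (hkK : k ≤ K) :
    1 < k * b ^ (Nat.factorial (b * K) + 1) + 1 ∧
      ¬ Nat.Prime (k * b ^ (Nat.factorial (b * K) + 1) + 1) := by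
  set N := Nat.factorial (b * K) + 1 with hN
  set m := b * k + 1 with hm
  have hcop : Nat.Coprime b m := by
    have : Nat.gcd b (b * k + 1) = Nat.gcd b 1 := by
      simpa using Nat.Coprime.gcd_mul_right_cancel_right (k := b) (n := 1) (m := k)
        (Nat.coprime_one_left k)
    simpa [Nat.Coprime, hm] using this
  have hm2 : 2 ≤ m := by
    have : 2 ≤ b * k := le_trans hb (Nat.le_mul_of_pos_right b hk)
    omega
  have htot : b ^ Nat.totient m ≡ 1 [MOD m] := Nat.ModEq.pow_totient hcop
  have htpos : 0 < Nat.totient m := Nat.totient_pos.2 (by omega)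
  have htle : Nat.totient m ≤ b * K := by
    have h1 : Nat.totient m ≤ m - 1 := by
      have := Nat.totient_lt m (by omega)
      omega
    have h2 : m - 1 ≤ b * K := by
      have : b * k ≤ b * K := Nat.mul_le_mul_left b hkK
      omega
    omega
  have hdvd : Nat.totient m ∣ Nat.factorial (b * K) :=
    Nat.dvd_factorial htpos htle
  obtain ⟨t, ht⟩ := hdvd
  have hfac : b ^ Nat.factorial (b * K) ≡ 1 [MOD m] := by
    calc b ^ Nat.factorial (b * K) = (b ^ Nat.totient m) ^ t := by
          rw [← pow_mul, ← ht]
      _ ≡ 1 ^ t [MOD m] := htot.pow t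
      _ = 1 := one_pow t
  have hbN : b ^ N ≡ b [MOD m] := by
    have : b ^ Nat.factorial (b * K) * b ≡ 1 * b [MOD m] := hfac.mul_right b
    simpa [hN, pow_succ] using this
  have hkey : m ∣ k * b ^ N + 1 := by
    have h : k * b ^ N + 1 ≡ k * b + 1 [MOD m] := (hbN.mul_left k).add_right 1
    have h0 : k * b + 1 ≡ 0 [MOD m] := by
      simp [Nat.ModEq, hm, Nat.mul_comm k b]
    exact (Nat.modEq_zero_iff_dvd).mp (h.trans h0)
  have hblt : b < b ^ N := by
    calc b = b ^ 1 := (pow_one b).symm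
      _ < b ^ N := Nat.pow_lt_pow_right (by omega) (by have := Nat.factorial_pos (b * K); omega)
  have hlt : m < k * b ^ N + 1 := by
    have : b * k < k * b ^ N := by
      calc b * k = k * b := Nat.mul_comm b k
        _ < k * b ^ N := Nat.mul_lt_mul_of_le_of_lt (le_refl k) hblt (by omega)
    omega
  have hpos : 0 < k * b ^ N := Nat.mul_pos hk (pow_pos (by omega) N)
  refine ⟨by omega, fun hp => ?_⟩
  rcases (Nat.Prime.eq_one_or_self_of_dvd hp m hkey) with h | h
  · omega
  · omega
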